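/- Let (Ω, 𝔉, P) be a probability space, let X : Ω → 𝒳 be a measurable map into a measurable space 𝒳, and let c, c̃ : Ω → Fin C be measurable (finitely valued) random labels. Assume c̃ is conditionally independent of X given c, and that P(c = j) > 0 for every j ∈ Fin C. Define q_j(i) := P(c̃ = i ∧ c = j) / P(c = j). Then for every i ∈ Fin C, P-almost everywhere, E[1_{c̃ = i} | σ(X)] = ∑_{j=1}^C q_j(i) · E[1_{c = j} | σ(X)]; that is, the posterior probability of the noisy label satisfies P(c̃ = i | X) = ∑_j q_j(i) P(c = j | X) almost surely. -/

import Mathlib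

open MeasureTheory

/-- The posterior probability of the noisy label is the q-mixture of the posterior
probabilities of the clean label: P(c̃ = i | X) = ∑_j q_j(i) P(c = j | X) a.s.
Conditional independence of c̃ and X given the (finitely valued) label c is stated
explicitly: P(c̃ = i, X ∈ B, c = j) ⬝ P(c = j) = P(c̃ = i, c = j) ⬝ P(X ∈ B, c = j). -/
theorem noisy_label_posterior
    {Ω 𝒳 : Type*} [MeasurableSpace Ω] [m𝒳 : MeasurableSpace 𝒳]
    (μ : Measure Ω) [IsProbabilityMeasure μ]
    (C : ℕ)
    (X : Ω → 𝒳) (hX : Measurable X)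
    (c ctil : Ω → Fin C) (hc : Measurable c) (hctil : Measurable ctil)
    (hpos : ∀ j : Fin C, 0 < μ {ω | c ω = j})
    (hcondindep : ∀ (i j : Fin C) (B : Set 𝒳), MeasurableSet B →
      (μ {ω | ctil ω = i ∧ X ω ∈ B ∧ c ω = j}).toReal * (μ {ω | c ω = j}).toReal
        = (μ {ω | ctil ω = i ∧ c ω = j}).toReal * (μ {ω | X ω ∈ B ∧ c ω = j}).toReal)
    (q : Fin C → Fin C → ℝ)
    (hq : ∀ j i, q j i = (μ {ω | ctil ω = i ∧ c ω = j}).toReal / (μ {ω | c ω = j}).toReal) :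
    ∀ i : Fin C,
      (μ[Set.indicator {ω | ctil ω = i} (fun _ => (1 : ℝ)) | MeasurableSpace.comap X m𝒳])
        =ᵐ[μ]
      fun ω => ∑ j : Fin C,
        q j i * (μ[Set.indicator {ω' | c ω' = j} (fun _ => (1 : ℝ)) |
          MeasurableSpace.comap X m𝒳]) ω := by
  intro i
  have hm : MeasurableSpace.comap X m𝒳 ≤ ‹MeasurableSpace Ω› := hX.comap_le
  have hmeas_ctil : MeasurableSet {ω | ctil ω = i} := hctil (measurableSet_singleton i)
  have hmeas_c : ∀ j : Fin C, MeasurableSet {ω | c ω = j} :=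
    fun j => hc (measurableSet_singleton j)
  have hint_ctil : Integrable (Set.indicator {ω | ctil ω = i} (fun _ => (1 : ℝ))) μ :=
    (integrable_const 1).indicator hmeas_ctil
  have hint_c : ∀ j : Fin C, Integrable (Set.indicator {ω' | c ω' = j} (fun _ => (1 : ℝ))) μ :=
    fun j => (integrable_const 1).indicator (hmeas_c j)
  -- integral of an indicator over a set
  have hind : ∀ (A : Set Ω), MeasurableSet A → ∀ t : Set Ω,
      ∫ x in t, Set.indicator A (fun _ => (1 : ℝ)) x ∂μ = (μ (A ∩ t)).toReal := by
    intro A hA t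
    rw [integral_indicator hA, Measure.restrict_restrict hA, setIntegral_const]
    simp
    rfl
  -- partition a set by the value of c
  have hpart : ∀ (A : Set Ω), MeasurableSet A →
      (μ A).toReal = ∑ j : Fin C, (μ (A ∩ {ω | c ω = j})).toReal := by
    intro A hA
    have hA_eq : A = ⋃ j : Fin C, A ∩ {ω | c ω = j} := by
      ext ω
      simp only [Set.mem_iUnion, Set.mem_inter_iff, Set.mem_setOf_eq]
      exact ⟨fun h => ⟨c ω, h, rfl⟩, fun ⟨j, h, _⟩ => h⟩
    have hdisj : Pairwise (Function.onFun Disjoint fun j : Fin C => A ∩ {ω | c ω = j}) := by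
      intro j k hjk
      refine Set.disjoint_left.2 ?_
      rintro ω ⟨-, hj⟩ ⟨-, hk⟩
      exact hjk (hj ▸ hk ▸ rfl)
    have hμ : μ A = ∑ j : Fin C, μ (A ∩ {ω | c ω = j}) := by
      conv_lhs => rw [hA_eq]
      rw [measure_iUnion (μ := μ) hdisj (fun j => hA.inter (hmeas_c j)), tsum_fintype]
    rw [hμ]
    exact ENNReal.toReal_sum fun j _ => measure_ne_top μ _
  symm
  refine ae_eq_condExp_of_forall_setIntegral_eq hm hint_ctil ?_ ?_ ?_
  · intro s _ _
    exact (integrable_finset_sum _ fun j _ => integrable_condExp.const_mul _).integrableOn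
  · rintro s ⟨B, hB, rfl⟩ -
    have hsm : MeasurableSet[MeasurableSpace.comap X m𝒳] (X ⁻¹' B) := ⟨B, hB, rfl⟩
    rw [integral_finset_sum _ fun j _ =>
      (integrable_condExp.const_mul _).restrict]
    have hterm : ∀ j : Fin C,
        ∫ x in X ⁻¹' B, q j i * (μ[Set.indicator {ω' | c ω' = j} (fun _ => (1 : ℝ)) |
            MeasurableSpace.comap X m𝒳]) x ∂μ
          = (μ {ω | ctil ω = i ∧ X ω ∈ B ∧ c ω = j}).toReal := by
      intro j
      rw [integral_const_mul, setIntegral_condExp hm (hint_c j) hsm, hind _ (hmeas_c j)]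
      have hset : {ω | c ω = j} ∩ X ⁻¹' B = {ω | X ω ∈ B ∧ c ω = j} := by
        ext ω; simp only [Set.mem_inter_iff, Set.mem_setOf_eq, Set.mem_preimage]; tauto
      rw [hset, hq]
      have hb : (μ {ω | c ω = j}).toReal ≠ 0 :=
        (ENNReal.toReal_pos (hpos j).ne' (measure_ne_top _ _)).ne'
      have hci := hcondindep i j B hB
      field_simp
      linarith
    calc ∑ j : Fin C, ∫ x in X ⁻¹' B,
          q j i * (μ[Set.indicator {ω' | c ω' = j} (fun _ => (1 : ℝ)) |
            MeasurableSpace.comap X m𝒳]) x ∂μ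
        = ∑ j : Fin C, (μ {ω | ctil ω = i ∧ X ω ∈ B ∧ c ω = j}).toReal :=
          Finset.sum_congr rfl fun j _ => hterm j
      _ = ∫ x in X ⁻¹' B, Set.indicator {ω | ctil ω = i} (fun _ => (1 : ℝ)) x ∂μ := by
          rw [hind _ hmeas_ctil, hpart _ (hmeas_ctil.inter (hX hB))]
          refine Finset.sum_congr rfl fun j _ => ?_
          congr 2
          ext ω
          simp only [Set.mem_inter_iff, Set.mem_setOf_eq, Set.mem_preimage]
          tauto
  · exact StronglyMeasurable.aestronglyMeasurable
      (Finset.stronglyMeasurable_fun_sum _ fun j _ =>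
        stronglyMeasurable_condExp.const_mul _)
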